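/- (Orthogonality of PDD components) Let d ≥ 1, let μ_j (j ∈ Fin d) be probability measures on ℝ, let μ := ⊗_j μ_j be their product measure on (Fin d → ℝ), and let f : (Fin d → ℝ) → ℝ be bounded and measurable. For u ⊆ Fin d define F_u(x) := ∫ f(x_u : z_{−u}) dμ(z) and f_u := Σ_{v ⊆ u} (−1)^{|u|−|v|} F_v. Then for all u, v ⊆ Fin d with u ≠ v, ∫ f_u(x) · f_v(x) dμ(x) = 0. -/

import Mathlib

open MeasureTheory Finset

/-- Partial dependence function: `F_u(x) = ∫ f(x_u : z_{-u}) dμ(z)`, where the hybrid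
point `(x_u : z_{-u})` takes coordinate `x j` for `j ∈ u` and `z j` otherwise. -/
noncomputable def partialDep {d : ℕ} (μ : Fin d → Measure ℝ)
    (f : (Fin d → ℝ) → ℝ) (u : Finset (Fin d)) (x : Fin d → ℝ) : ℝ :=
  ∫ z, f (fun j => if j ∈ u then x j else z j) ∂(Measure.pi μ)

/-- PDD component: `f_u = Σ_{v ⊆ u} (-1)^(|u|-|v|) F_v`. -/
noncomputable def pddComp {d : ℕ} (μ : Fin d → Measure ℝ)
    (f : (Fin d → ℝ) → ℝ) (u : Finset (Fin d)) (x : Fin d → ℝ) : ℝ :=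
  ∑ v ∈ u.powerset, (-1 : ℝ) ^ (u.card - v.card) * partialDep μ f v x

section Aux

variable {d : ℕ} (μ : Fin d → Measure ℝ) [∀ i, IsProbabilityMeasure (μ i)]
  {f : (Fin d → ℝ) → ℝ}

lemma measurable_updatePair (j : Fin d) :
    Measurable fun p : (Fin d → ℝ) × ℝ => Function.update p.1 j p.2 := by
  apply measurable_pi_lambda
  intro i
  by_cases h : i = j
  · subst h
    simpa using (measurable_snd : Measurable fun p : (Fin d → ℝ) × ℝ => p.2)
  · simp only [Function.update_of_ne h]
    exact (measurable_pi_apply i).comp measurable_fst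

/-- Replacing coordinate `j` by an independent copy preserves the product measure. -/
lemma map_updatePair (j : Fin d) :
    Measure.map (fun p : (Fin d → ℝ) × ℝ => Function.update p.1 j p.2)
      ((Measure.pi μ).prod (μ j)) = Measure.pi μ := by
  refine (Measure.pi_eq fun s hs => ?_).symm
  rw [Measure.map_apply (measurable_updatePair j) (MeasurableSet.univ_pi hs)]
  have hpre : (fun p : (Fin d → ℝ) × ℝ => Function.update p.1 j p.2) ⁻¹' Set.pi Set.univ s
      = (Set.pi Set.univ (fun i => if i = j then Set.univ else s i)) ×ˢ s j := by
    ext ⟨x, t⟩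
    simp only [Set.mem_preimage, Set.mem_pi, Set.mem_univ, true_implies, Set.mem_prod]
    constructor
    · intro h
      refine ⟨fun i => ?_, ?_⟩
      · by_cases hij : i = j
        · simp [hij]
        · simpa [hij, Function.update_of_ne hij] using h i
      · simpa using h j
    · rintro ⟨h1, h2⟩ i
      by_cases hij : i = j
      · subst hij; simpa using h2
      · have := h1 i
        simp only [hij, if_false] at this
        simpa [Function.update_of_ne hij] using this
  rw [hpre, Measure.prod_prod, Measure.pi_pi]
  have h1 : (∏ i, μ i (if i = j then Set.univ else s i))
      = ∏ i ∈ Finset.univ.erase j, μ i (s i) := by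
    rw [← Finset.prod_erase_mul _ _ (Finset.mem_univ j)]
    have h2 : (∏ i ∈ Finset.univ.erase j, μ i (if i = j then Set.univ else s i))
        = ∏ i ∈ Finset.univ.erase j, μ i (s i) :=
      Finset.prod_congr rfl fun i hi => by
        rw [if_neg (Finset.ne_of_mem_erase hi)]
    rw [h2]
    simp
  rw [h1, Finset.prod_erase_mul _ _ (Finset.mem_univ j)]

/-- Fubini-type identity: averaging coordinate `j` over an independent copy. -/
lemma integral_updatePair (j : Fin d) {g : (Fin d → ℝ) → ℝ} (hg : Measurable g)
    (hgi : Integrable g (Measure.pi μ)) :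
    ∫ x, g x ∂(Measure.pi μ)
      = ∫ x, ∫ t, g (Function.update x j t) ∂(μ j) ∂(Measure.pi μ) := by
  have hmap := map_updatePair μ j
  have hint : Integrable (fun p : (Fin d → ℝ) × ℝ => g (Function.update p.1 j p.2))
      ((Measure.pi μ).prod (μ j)) := by
    rw [← hmap] at hgi
    exact (integrable_map_measure hg.aestronglyMeasurable
      (measurable_updatePair j).aemeasurable).mp hgi
  calc ∫ x, g x ∂(Measure.pi μ)
      = ∫ p, g (Function.update p.1 j p.2) ∂((Measure.pi μ).prod (μ j)) := by
        conv_lhs => rw [← hmap]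
        rw [integral_map (measurable_updatePair j).aemeasurable
          hg.aestronglyMeasurable]
    _ = ∫ x, ∫ t, g (Function.update x j t) ∂(μ j) ∂(Measure.pi μ) :=
        integral_prod _ hint

variable (hf : Measurable f) {C : ℝ} (hC : ∀ x, |f x| ≤ C)

include hf in
lemma measurable_hybridPair (v : Finset (Fin d)) :
    Measurable fun p : (Fin d → ℝ) × (Fin d → ℝ) =>
      f (fun j => if j ∈ v then p.1 j else p.2 j) := by
  apply hf.comp
  apply measurable_pi_lambda
  intro i
  by_cases h : i ∈ v
  · simp only [h, if_true]
    exact (measurable_pi_apply i).comp measurable_fst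
  · simp only [h, if_false]
    exact (measurable_pi_apply i).comp measurable_snd

include hf in
lemma partialDep_stronglyMeasurable (v : Finset (Fin d)) :
    StronglyMeasurable (partialDep μ f v) :=
  (measurable_hybridPair hf v).stronglyMeasurable.integral_prod_right'

include hC in
lemma partialDep_bound (v : Finset (Fin d)) (x : Fin d → ℝ) :
    |partialDep μ f v x| ≤ C := by
  have := norm_integral_le_of_norm_le_const (μ := Measure.pi μ)
    (f := fun z => f (fun j => if j ∈ v then x j else z j)) (C := C)
    (ae_of_all _ fun z => by simpa using hC _)
  simpa [partialDep] using this

include hf in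
lemma pddComp_stronglyMeasurable (u : Finset (Fin d)) :
    StronglyMeasurable (pddComp μ f u) := by
  unfold pddComp
  exact Finset.stronglyMeasurable_fun_sum _ fun v _ =>
    (partialDep_stronglyMeasurable μ hf v).const_smul ((-1 : ℝ) ^ (u.card - v.card))

include hC in
lemma pddComp_bound (u : Finset (Fin d)) (x : Fin d → ℝ) :
    |pddComp μ f u x| ≤ (u.powerset.card : ℝ) * C := by
  calc |pddComp μ f u x| ≤ ∑ v ∈ u.powerset,
        |(-1 : ℝ) ^ (u.card - v.card) * partialDep μ f v x| :=
      Finset.abs_sum_le_sum_abs _ _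
    _ ≤ ∑ _v ∈ u.powerset, C := by
        refine Finset.sum_le_sum fun v _ => ?_
        rw [abs_mul, abs_pow, abs_neg, abs_one, one_pow, one_mul]
        exact partialDep_bound μ hC v x
    _ = (u.powerset.card : ℝ) * C := by rw [Finset.sum_const, nsmul_eq_mul]

include hf hC in
lemma partialDep_integrable (v : Finset (Fin d)) :
    Integrable (partialDep μ f v) (Measure.pi μ) :=
  ⟨(partialDep_stronglyMeasurable μ hf v).aestronglyMeasurable,
    HasFiniteIntegral.of_bounded (C := C)
      (ae_of_all _ fun x => by simpa using partialDep_bound μ hC v x)⟩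

include hf hC in
lemma pddComp_integrable (u : Finset (Fin d)) :
    Integrable (pddComp μ f u) (Measure.pi μ) :=
  ⟨(pddComp_stronglyMeasurable μ hf u).aestronglyMeasurable,
    HasFiniteIntegral.of_bounded (C := (u.powerset.card : ℝ) * C)
      (ae_of_all _ fun x => by simpa using pddComp_bound μ hC u x)⟩

/-- If `j ∉ v`, `F_v` does not depend on coordinate `j`. -/
lemma partialDep_update_of_not_mem {j : Fin d} {v : Finset (Fin d)} (hj : j ∉ v)
    (x : Fin d → ℝ) (t : ℝ) :
    partialDep μ f v (Function.update x j t) = partialDep μ f v x := by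
  unfold partialDep
  congr 1
  ext z
  congr 1
  ext i
  by_cases h : i ∈ v
  · have : i ≠ j := fun e => hj (e ▸ h)
    simp [h, Function.update_of_ne this]
  · simp [h]

include hf hC in
/-- Averaging `F_v` over coordinate `j ∈ v` gives `F_{v \ {j}}`. -/
lemma integral_update_partialDep {j : Fin d} {v : Finset (Fin d)} (hj : j ∈ v)
    (x : Fin d → ℝ) :
    ∫ t, partialDep μ f v (Function.update x j t) ∂(μ j)
      = partialDep μ f (v.erase j) x := by
  -- g z := f of the hybrid for v.erase j
  set g : (Fin d → ℝ) → ℝ := fun z => f (fun i => if i ∈ v.erase j then x i else z i)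
    with hg_def
  have hgm : Measurable g := by
    apply hf.comp
    apply measurable_pi_lambda
    intro i
    by_cases h : i ∈ v.erase j
    · simp only [h, if_true]; exact measurable_const
    · simp only [h, if_false]; exact measurable_pi_apply i
  have hgi : Integrable g (Measure.pi μ) :=
    ⟨hgm.aestronglyMeasurable, HasFiniteIntegral.of_bounded (C := C)
      (ae_of_all _ fun z => by simpa using hC _)⟩
  have key : ∀ (z : Fin d → ℝ) (t : ℝ), g (Function.update z j t)
      = f (fun i => if i ∈ v then Function.update x j t i else z i) := by
    intro z t
    simp only [hg_def]
    congr 1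
    ext i
    by_cases hi : i ∈ v
    · by_cases hij : i = j
      · subst hij
        simp [hj, Finset.notMem_erase]
      · simp [hi, Finset.mem_erase, hij, Function.update_of_ne hij]
    · have hij : i ≠ j := fun e => hi (e ▸ hj)
      have : i ∉ v.erase j := fun h => hi (Finset.mem_of_mem_erase h)
      simp [hi, this, Function.update_of_ne hij]
  have step1 : partialDep μ f (v.erase j) x
      = ∫ z, ∫ t, g (Function.update z j t) ∂(μ j) ∂(Measure.pi μ) :=
    integral_updatePair μ j hgm hgi
  -- Fubini swap
  have hFm : Measurable fun p : (Fin d → ℝ) × ℝ => g (Function.update p.1 j p.2) :=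
    hgm.comp (measurable_updatePair j)
  have hFi : Integrable (fun p : (Fin d → ℝ) × ℝ => g (Function.update p.1 j p.2))
      ((Measure.pi μ).prod (μ j)) :=
    ⟨hFm.aestronglyMeasurable, HasFiniteIntegral.of_bounded (C := C)
      (ae_of_all _ fun p => by simpa [hg_def] using hC _)⟩
  have swap : ∫ z, ∫ t, g (Function.update z j t) ∂(μ j) ∂(Measure.pi μ)
      = ∫ t, ∫ z, g (Function.update z j t) ∂(Measure.pi μ) ∂(μ j) :=
    integral_integral_swap hFi
  rw [step1, swap]
  refine integral_congr_ae (ae_of_all _ fun t => ?_)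
  simp only [key]
  rfl

include hf hC in
/-- Averaging the PDD component `f_u` over any coordinate `j ∈ u` gives `0`. -/
lemma integral_update_pddComp {j : Fin d} {u : Finset (Fin d)} (hj : j ∈ u)
    (x : Fin d → ℝ) :
    ∫ t, pddComp μ f u (Function.update x j t) ∂(μ j) = 0 := by
  unfold pddComp
  rw [integral_finset_sum]
  · have hterm : ∀ v ∈ u.powerset,
        ∫ t, (-1 : ℝ) ^ (u.card - v.card) * partialDep μ f v (Function.update x j t) ∂(μ j)
        = (-1 : ℝ) ^ (u.card - v.card) *
            (if j ∈ v then partialDep μ f (v.erase j) x else partialDep μ f v x) := by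
      intro v _
      rw [integral_const_mul]
      by_cases h : j ∈ v
      · rw [if_pos h, integral_update_partialDep μ hf hC h x]
      · rw [if_neg h]
        simp only [partialDep_update_of_not_mem μ h x]
        rw [integral_const]
        simp
    rw [Finset.sum_congr rfl hterm]
    -- now the combinatorial cancellation
    have hu : u = insert j (u.erase j) := (Finset.insert_erase hj).symm
    rw [hu]
    rw [Finset.sum_powerset_insert (Finset.notMem_erase j u)]
    have hcard : (insert j (u.erase j)).card = (u.erase j).card + 1 := by
      rw [Finset.card_insert_of_notMem (Finset.notMem_erase j u)]
    rw [← Finset.sum_add_distrib]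
    refine Finset.sum_eq_zero fun v hv => ?_
    have hjv : j ∉ v := fun h =>
      Finset.notMem_erase j u (Finset.mem_powerset.mp hv h)
    have hvc : v.card ≤ (u.erase j).card :=
      Finset.card_le_card (Finset.mem_powerset.mp hv)
    rw [if_neg hjv, if_pos (Finset.mem_insert_self j v),
      Finset.erase_insert hjv,
      Finset.card_insert_of_notMem hjv, hcard]
    have h1 : (u.erase j).card + 1 - v.card = ((u.erase j).card - v.card) + 1 := by omega
    have h2 : (u.erase j).card + 1 - (v.card + 1) = (u.erase j).card - v.card := by omega
    rw [h1, h2, pow_succ]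
    ring
  · intro v _
    have hm : Measurable fun t => partialDep μ f v (Function.update x j t) :=
      (partialDep_stronglyMeasurable μ hf v).measurable.comp (measurable_update x)
    refine Integrable.const_mul ?_ _
    exact ⟨hm.aestronglyMeasurable, HasFiniteIntegral.of_bounded (C := C)
      (ae_of_all _ fun t => by simpa using partialDep_bound μ hC v _)⟩

lemma pddComp_update_of_not_mem {j : Fin d} {v : Finset (Fin d)} (hj : j ∉ v)
    (x : Fin d → ℝ) (t : ℝ) :
    pddComp μ f v (Function.update x j t) = pddComp μ f v x := by
  unfold pddComp
  refine Finset.sum_congr rfl fun w hw => ?_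
  have hjw : j ∉ w := fun h => hj (Finset.mem_powerset.mp hw h)
  rw [partialDep_update_of_not_mem μ hjw]

include hf hC in
lemma pddComp_orthogonal_aux {u v : Finset (Fin d)} {j : Fin d}
    (hju : j ∈ u) (hjv : j ∉ v) :
    ∫ x, pddComp μ f u x * pddComp μ f v x ∂(Measure.pi μ) = 0 := by
  set g : (Fin d → ℝ) → ℝ := fun x => pddComp μ f u x * pddComp μ f v x with hg_def
  have hgm : Measurable g :=
    ((pddComp_stronglyMeasurable μ hf u).measurable).mul
      ((pddComp_stronglyMeasurable μ hf v).measurable)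
  have hgi : Integrable g (Measure.pi μ) :=
    ⟨hgm.aestronglyMeasurable,
      HasFiniteIntegral.of_bounded
        (C := ((u.powerset.card : ℝ) * C) * ((v.powerset.card : ℝ) * C))
        (ae_of_all _ fun x => by
          have := mul_le_mul (pddComp_bound μ hC u x) (pddComp_bound μ hC v x)
            (abs_nonneg _) (le_trans (abs_nonneg _) (pddComp_bound μ hC u x))
          simpa [hg_def, abs_mul] using this)⟩
  rw [integral_updatePair μ j hgm hgi]
  rw [show (0 : ℝ) = ∫ _x, (0 : ℝ) ∂(Measure.pi μ) by simp]
  refine integral_congr_ae (ae_of_all _ fun x => ?_)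
  have : ∀ t, g (Function.update x j t)
      = pddComp μ f u (Function.update x j t) * pddComp μ f v x := by
    intro t
    rw [hg_def]
    simp only [pddComp_update_of_not_mem μ hjv]
  simp only [this]
  rw [integral_mul_const, integral_update_pddComp μ hf hC hju, zero_mul]

end Aux

/-- Orthogonality of PDD components: for `u ≠ v`, `∫ f_u(x) f_v(x) dμ(x) = 0`. -/
theorem pddComp_orthogonal {d : ℕ} (hd : 1 ≤ d)
    (μ : Fin d → Measure ℝ) [∀ i, IsProbabilityMeasure (μ i)]
    (f : (Fin d → ℝ) → ℝ) (hf : Measurable f) (C : ℝ) (hC : ∀ x, |f x| ≤ C)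
    (u v : Finset (Fin d)) (huv : u ≠ v) :
    ∫ x, pddComp μ f u x * pddComp μ f v x ∂(Measure.pi μ) = 0 := by
  have : (∃ j, j ∈ u ∧ j ∉ v) ∨ (∃ j, j ∈ v ∧ j ∉ u) := by
    by_contra h
    push_neg at h
    exact huv (Finset.Subset.antisymm (fun a ha => h.1 a ha) (fun a ha => h.2 a ha))
  rcases this with ⟨j, hju, hjv⟩ | ⟨j, hjv, hju⟩
  · exact pddComp_orthogonal_aux μ hf hC hju hjv
  · rw [show (fun x => pddComp μ f u x * pddComp μ f v x)
        = fun x => pddComp μ f v x * pddComp μ f u x by ext x; ring]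
    exact pddComp_orthogonal_aux μ hf hC hjv hju
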